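/- Let G be a connected graph and let s, t be distinct vertices with d = dist_G(s, t). Then for every 0 < i < d, the set D_i is a minimal s-t separator of the induced subgraph G[D]: deleting D_i from G[D] leaves no s-t path, while for every proper subset S ⊊ D_i, the graph G[D] − S still contains an s-t path. -/
import Mathlib

/-- `D_i`: the vertices at distance `i` from `s` and distance `d - i` from `t`,
where `d = dist_G(s, t)`. -/
def SimpleGraph.levelSet {V : Type*} (G : SimpleGraph V) (s t : V) (i : ℕ) : Set V :=
  {v | G.dist s v = i ∧ G.dist v t = G.dist s t - i}

/-- `D = ⋃_{0 ≤ i ≤ d} D_i`. -/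
def SimpleGraph.levelUnion {V : Type*} (G : SimpleGraph V) (s t : V) : Set V :=
  ⋃ i ∈ Set.Iic (G.dist s t), G.levelSet s t i

/-- `S ⊆ V \ {a, b}` is an `a`-`b` separator of `G` if deleting `S` from `G` leaves no
path between `a` and `b`, equivalently every `a`-`b` walk of `G` meets `S`. -/
def SimpleGraph.IsSeparator {V : Type*} (G : SimpleGraph V) (a b : V) (S : Set V) : Prop :=
  a ∉ S ∧ b ∉ S ∧ ∀ p : G.Walk a b, ∃ x ∈ p.support, x ∈ S

/-- Discrete intermediate value theorem along a walk in an induced subgraph. -/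
lemma stmt7_ivt {V : Type*} (G : SimpleGraph V) (hG : G.Connected) (s : V) (D : Set V) (i : ℕ) :
    ∀ {u v : ↥D} (p : (G.induce D).Walk u v), G.dist s u < i → i ≤ G.dist s v →
      ∃ x ∈ p.support, G.dist s (x : V) = i := by
  intro u v p
  induction p with
  | nil => intro h1 h2; omega
  | cons h q ih =>
    rename_i a b c
    intro h1 h2
    have hadj : G.Adj (a : V) (b : V) := h
    have hle : G.dist s (b : V) ≤ G.dist s (a : V) + 1 := by
      calc G.dist s (b : V) ≤ G.dist s (a : V) + G.dist (a : V) (b : V) := hG.dist_triangle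
        _ = G.dist s (a : V) + 1 := by rw [SimpleGraph.dist_eq_one_iff_adj.mpr hadj]
    by_cases hb : G.dist s (b : V) < i
    · obtain ⟨x, hx, hxd⟩ := ih hb h2
      exact ⟨x, by simp [SimpleGraph.Walk.support_cons, hx], hxd⟩
    · exact ⟨b, by simp [SimpleGraph.Walk.support_cons], by omega⟩

/-- Lift a walk whose support lies in `D` into the induced subgraph `G[D]`. -/
lemma stmt7_lift {V : Type*} (G : SimpleGraph V) (D : Set V) :
    ∀ {u v : V} (p : G.Walk u v) (_ : ∀ x ∈ p.support, x ∈ D) (hu : u ∈ D) (hv : v ∈ D),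
      ∃ q : (G.induce D).Walk ⟨u, hu⟩ ⟨v, hv⟩, ∀ x ∈ q.support, (x : V) ∈ p.support := by
  intro u v p
  induction p with
  | nil =>
    intro h hu hv
    exact ⟨SimpleGraph.Walk.nil.copy rfl (by ext; rfl), by simp⟩
  | cons h q ih =>
    rename_i a b c
    intro hsupp hu hv
    have hb : b ∈ D := hsupp b (by simp [SimpleGraph.Walk.support_cons])
    obtain ⟨q', hq'⟩ := ih (fun x hx => hsupp x (by simp [SimpleGraph.Walk.support_cons, hx])) hb hv
    have hadj : (G.induce D).Adj ⟨a, hu⟩ ⟨b, hb⟩ := h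
    exact ⟨SimpleGraph.Walk.cons hadj q', by
      intro x hx
      rcases (SimpleGraph.Walk.support_cons hadj q' ▸ hx) with hx
      simp only [List.mem_cons] at hx
      rcases hx with rfl | hx
      · simp [SimpleGraph.Walk.support_cons]
      · simp [SimpleGraph.Walk.support_cons, hq' x hx]⟩

/-- On a shortest walk, distances to the endpoints add up. -/
lemma stmt7_split_dist {V : Type*} [DecidableEq V] (G : SimpleGraph V) (hG : G.Connected)
    {u v : V} (p : G.Walk u v) (hp : p.length = G.dist u v) {x : V} (hx : x ∈ p.support) :
    G.dist u x + G.dist x v = G.dist u v := by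
  have h1 : G.dist u x ≤ (p.takeUntil x hx).length := SimpleGraph.dist_le _
  have h2 : G.dist x v ≤ (p.dropUntil x hx).length := SimpleGraph.dist_le _
  have h3 : (p.takeUntil x hx).length + (p.dropUntil x hx).length = p.length := by
    rw [← SimpleGraph.Walk.length_append, SimpleGraph.Walk.take_spec]
  have h4 : G.dist u v ≤ G.dist u x + G.dist x v := hG.dist_triangle
  omega

theorem stmt7 {V : Type*} (G : SimpleGraph V) (hG : G.Connected) (s t : V) (hst : s ≠ t)
    (i : ℕ) (hi0 : 0 < i) (hid : i < G.dist s t) :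
    (G.induce (G.levelUnion s t)).IsSeparator
      ⟨s, Set.mem_biUnion (Nat.zero_le _)
        (by simp [SimpleGraph.levelSet, SimpleGraph.dist_self])⟩
      ⟨t, Set.mem_biUnion (le_refl (G.dist s t))
        (by simp [SimpleGraph.levelSet, SimpleGraph.dist_self])⟩
      {x | (x : V) ∈ G.levelSet s t i} ∧
    ∀ S : Set ↥(G.levelUnion s t), S ⊂ {x | (x : V) ∈ G.levelSet s t i} →
      ∃ p : (G.induce (G.levelUnion s t)).Walk
        ⟨s, Set.mem_biUnion (Nat.zero_le _)
          (by simp [SimpleGraph.levelSet, SimpleGraph.dist_self])⟩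
        ⟨t, Set.mem_biUnion (le_refl (G.dist s t))
          (by simp [SimpleGraph.levelSet, SimpleGraph.dist_self])⟩,
        ∀ x ∈ p.support, x ∉ S := by
  classical
  set d := G.dist s t with hd
  constructor
  · refine ⟨?_, ?_, ?_⟩
    · intro h
      simp only [Set.mem_setOf_eq, SimpleGraph.levelSet] at h
      rw [SimpleGraph.dist_self] at h
      omega
    · intro h
      simp only [Set.mem_setOf_eq, SimpleGraph.levelSet] at h
      omega
    · intro p
      obtain ⟨x, hx, hxd⟩ := stmt7_ivt G hG s (G.levelUnion s t) i p
        (by show G.dist s s < i; simp [SimpleGraph.dist_self]; omega)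
        (by show i ≤ G.dist s t; omega)
      refine ⟨x, hx, ?_⟩
      have hxD := x.2
      simp only [SimpleGraph.levelUnion, Set.mem_iUnion₂] at hxD
      obtain ⟨j, hj, hxj⟩ := hxD
      have : j = i := by rw [← hxj.1, hxd]
      subst this
      exact hxj
  · intro S hS
    obtain ⟨w', hw'1, hw'2⟩ := Set.exists_of_ssubset hS
    simp only [Set.mem_setOf_eq, SimpleGraph.levelSet] at hw'1
    set w : V := (w' : V) with hwdef
    have hsw : G.dist s w = i := hw'1.1
    have hwt : G.dist w t = d - i := hw'1.2
    obtain ⟨p1, hp1⟩ := (hG.preconnected s w).exists_walk_length_eq_dist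
    obtain ⟨p2, hp2⟩ := (hG.preconnected w t).exists_walk_length_eq_dist
    -- facts about p1's support
    have hfact1 : ∀ x ∈ p1.support, G.dist s x + G.dist x w = i := by
      intro x hx
      have := stmt7_split_dist G hG p1 hp1 hx
      omega
    have hfact2 : ∀ x ∈ p2.support, G.dist w x + G.dist x t = d - i := by
      intro x hx
      have := stmt7_split_dist G hG p2 hp2 hx
      omega
    have hmemD : ∀ x ∈ (p1.append p2).support, x ∈ G.levelUnion s t := by
      intro x hx
      rw [SimpleGraph.Walk.mem_support_append_iff] at hx
      simp only [SimpleGraph.levelUnion, Set.mem_iUnion₂]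
      rcases hx with hx | hx
      · have h1 := hfact1 x hx
        have h2 : G.dist x t ≤ G.dist x w + G.dist w t := hG.dist_triangle
        have h3 : d ≤ G.dist s x + G.dist x t := hG.dist_triangle
        refine ⟨G.dist s x, by simp [Set.mem_Iic]; omega, rfl, by omega⟩
      · have h1 := hfact2 x hx
        have h2 : G.dist s x ≤ G.dist s w + G.dist w x := hG.dist_triangle
        have h3 : d ≤ G.dist s x + G.dist x t := hG.dist_triangle
        refine ⟨G.dist s x, by simp [Set.mem_Iic]; omega, rfl, by omega⟩
    obtain ⟨q, hq⟩ := stmt7_lift G (G.levelUnion s t) (p1.append p2) hmemD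
      (Set.mem_biUnion (Nat.zero_le _)
        (by simp [SimpleGraph.levelSet, SimpleGraph.dist_self]))
      (Set.mem_biUnion (le_refl (G.dist s t))
        (by simp [SimpleGraph.levelSet, SimpleGraph.dist_self]))
    refine ⟨q, ?_⟩
    intro x hx hxS
    have hxi : (x : V) ∈ G.levelSet s t i := hS.subset hxS
    have hdsx : G.dist s (x : V) = i := hxi.1
    have hxp := hq x hx
    rw [SimpleGraph.Walk.mem_support_append_iff] at hxp
    have hxw : (x : V) = w := by
      rcases hxp with hxp | hxp
      · have h1 := hfact1 _ hxp
        have : G.dist (x : V) w = 0 := by omega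
        exact hG.dist_eq_zero_iff.mp this
      · have h1 := hfact2 _ hxp
        have h2 : G.dist s (x : V) ≤ G.dist s w + G.dist w (x : V) := hG.dist_triangle
        have h3 : d ≤ G.dist s (x : V) + G.dist (x : V) t := hG.dist_triangle
        have : G.dist w (x : V) = 0 := by omega
        exact (hG.dist_eq_zero_iff.mp this).symm
    have : x = w' := Subtype.ext hxw
    rw [this] at hxS
    exact hw'2 hxS
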